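/- Let L be a regular language over a finite linearly ordered alphabet Σ, let D₀ be a minimal DFA for L (every state reachable from the initial state, every state able to reach a final state, and any two words of Pref(L) that are Myhill–Nerode equivalent for L reach the same state), and let D be any DFA with L(D) = L (every state reachable and useful). If Q' is a set of states of D₀ entangled in D₀, then there exists a set Q'' of states of D, entangled in D, with |Q''| = |Q'|. Consequently ent(D₀) ≤ ent(D), i.e., the minimal DFA realizes the entanglement of the language: ent(D₀) = ent(L). -/
import Mathlib


/-- Strict co-lexicographic order on words: compare reversed words lexicographically. -/
def colexLt {A : Type} [LinearOrder A] (α β : List A) : Prop :=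
  List.Lex (· < ·) α.reverse β.reverse

/-- Co-lexicographic order (reflexive version). -/
def colexLe {A : Type} [LinearOrder A] (α β : List A) : Prop :=
  colexLt α β ∨ α = β

/-- The prefix closure of a language. -/
def Pref {A : Type} (L : Set (List A)) : Set (List A) :=
  {α | ∃ γ : List A, α ++ γ ∈ L}

/-- The Myhill–Nerode equivalence of a language. -/
def NerodeEq {A : Type} (L : Set (List A)) (α β : List A) : Prop :=
  ∀ γ : List A, α ++ γ ∈ L ↔ β ++ γ ∈ L

/-- A monotone (nondecreasing or nonincreasing) sequence of words w.r.t. co-lex order. -/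
def MonotoneSeq {A : Type} [LinearOrder A] (α : ℕ → List A) : Prop :=
  (∀ i, colexLe (α i) (α (i + 1))) ∨ (∀ i, colexLe (α (i + 1)) (α i))

/-- A partition of the state set into `p` chains with respect to the relation `le`. -/
def IsChainPartition {Q : Type} (le : Q → Q → Prop) (p : ℕ) (f : Fin p → Set Q) : Prop :=
  (∀ q : Q, ∃! i : Fin p, q ∈ f i) ∧
  ∀ i : Fin p, ∀ u ∈ f i, ∀ v ∈ f i, le u v ∨ le v u

/-- A deterministic finite automaton (with possibly undefined transitions). -/
structure DFA' (A Q : Type) where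
  start : Q
  delta : Q → A → Option Q
  accept : Set Q

namespace DFA'

variable {A Q : Type}

/-- Extended (partial) transition function on words. -/
def deltaStar (D : DFA' A Q) : Q → List A → Option Q
  | q, [] => some q
  | q, a :: w => (D.delta q a).bind fun r => D.deltaStar r w

/-- `D.Iq q` is the set of words reaching `q` from the initial state. -/
def Iq (D : DFA' A Q) (q : Q) : Set (List A) :=
  {α | D.deltaStar D.start α = some q}

/-- The accepted language. -/
def lang (D : DFA' A Q) : Set (List A) :=
  {α | ∃ q ∈ D.accept, D.deltaStar D.start α = some q}

/-- Labels of transitions entering a state, with the extra bottom symbol `#`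
added exactly for the initial state. -/
def lam (D : DFA' A Q) (q : Q) : Set (WithBot A) :=
  {x | ∃ (a : A) (u : Q), x = (a : WithBot A) ∧ D.delta u a = some q} ∪
    {x | q = D.start ∧ x = (⊥ : WithBot A)}

/-- Every state is reachable from the initial state. -/
def Reachable (D : DFA' A Q) : Prop :=
  ∀ q : Q, ∃ α : List A, D.deltaStar D.start α = some q

/-- Every state can reach a final state. -/
def Useful (D : DFA' A Q) : Prop :=
  ∀ q : Q, ∃ (β : List A) (f : Q), f ∈ D.accept ∧ D.deltaStar q β = some f

/-- The relation `≤_D`: `u ≤_D v` iff `u = v` or every word reaching `u` is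
co-lexicographically strictly smaller than every word reaching `v`. -/
def leD [LinearOrder A] (D : DFA' A Q) (u v : Q) : Prop :=
  u = v ∨ ∀ α ∈ D.Iq u, ∀ β ∈ D.Iq v, colexLt α β

/-- The strict relation `<_D`. -/
def ltD [LinearOrder A] (D : DFA' A Q) (u v : Q) : Prop :=
  u ≠ v ∧ ∀ α ∈ D.Iq u, ∀ β ∈ D.Iq v, colexLt α β

/-- A set of states of a DFA is entangled if some monotone sequence of words of
`Pref (L(D))` visits every state of the set infinitely often. -/
def Entangled [LinearOrder A] (D : DFA' A Q) (Q' : Set Q) : Prop :=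
  ∃ α : ℕ → List A, (∀ i, α i ∈ Pref D.lang) ∧ MonotoneSeq α ∧
    ∀ q ∈ Q', {i : ℕ | D.deltaStar D.start (α i) = some q}.Infinite

end DFA'

/-- A co-lex order on a DFA: a partial order on the states satisfying Axioms 1 and 2. -/
structure IsColexDFA {A Q : Type} [LinearOrder A] (D : DFA' A Q) (le : Q → Q → Prop) : Prop where
  refl : ∀ u, le u u
  antisymm : ∀ u v, le u v → le v u → u = v
  trans : ∀ u v w, le u v → le v w → le u w
  ax1 : ∀ u v, le u v → u ≠ v → ∀ a ∈ D.lam u, ∀ b ∈ D.lam v, a ≤ b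
  ax2 : ∀ (a : A) (u v u' v' : Q),
      D.delta u' a = some u → D.delta v' a = some v → le u v → u ≠ v → le u' v'

theorem my_deltaStar_append {A Q : Type} (D : DFA' A Q) (q : Q) (α γ : List A) :
    D.deltaStar q (α ++ γ) = (D.deltaStar q α).bind fun r => D.deltaStar r γ := by
  induction α generalizing q with
  | nil => simp [DFA'.deltaStar]
  | cons a w ih =>
    simp only [List.cons_append, DFA'.deltaStar]
    cases D.delta q a with
    | none => simp
    | some r => simp [ih]

theorem my_pref_defined {A Q : Type} (D : DFA' A Q) {β : List A} (h : β ∈ Pref D.lang) :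
    ∃ p, D.deltaStar D.start β = some p := by
  obtain ⟨γ, f, hf, hrun⟩ := h
  rw [my_deltaStar_append] at hrun
  cases hd : D.deltaStar D.start β with
  | none => rw [hd] at hrun; simp at hrun
  | some p => exact ⟨p, rfl⟩

theorem my_nerode_of_same_state {A Q : Type} (D : DFA' A Q) {β1 β2 : List A} {p : Q}
    (h1 : D.deltaStar D.start β1 = some p) (h2 : D.deltaStar D.start β2 = some p) :
    NerodeEq D.lang β1 β2 := by
  intro γ
  constructor
  · rintro ⟨f, hf, hrun⟩
    refine ⟨f, hf, ?_⟩
    rw [my_deltaStar_append] at hrun ⊢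
    rw [h1] at hrun
    rw [h2]
    exact hrun
  · rintro ⟨f, hf, hrun⟩
    refine ⟨f, hf, ?_⟩
    rw [my_deltaStar_append] at hrun ⊢
    rw [h2] at hrun
    rw [h1]
    exact hrun

theorem my_exists_infinite_fiber {α β : Type} [Finite β] {s : Set α} (hs : s.Infinite)
    (f : α → β) : ∃ b, {a | a ∈ s ∧ f a = b}.Infinite := by
  have : Infinite ↥s := hs.to_subtype
  obtain ⟨b, hb⟩ := Finite.exists_infinite_fiber (fun x : s => f x)
  refine ⟨b, ?_⟩
  have hinj : Set.InjOn (fun x : s => (x : α)) ((fun x : s => f x) ⁻¹' {b}) := by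
    intro x _ y _ h; exact Subtype.ext h
  have himg : Set.Infinite ((fun x : s => (x : α)) '' ((fun x : s => f x) ⁻¹' {b})) :=
    (Set.infinite_coe_iff.mp hb).image hinj
  apply himg.mono
  rintro a ⟨x, hx, rfl⟩
  exact ⟨x.2, hx⟩

/-- any set of states entangled in the minimal DFA `D0` of `L`
gives rise to an equally large set of states entangled in any DFA `D`
accepting `L`; hence the minimal DFA realizes the entanglement of `L`. -/
theorem stmt_8 {A Q0 Q : Type} [LinearOrder A] [Fintype A] [Fintype Q0] [Fintype Q]
    (L : Set (List A)) (D0 : DFA' A Q0) (D : DFA' A Q)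
    (h0reach : D0.Reachable) (h0use : D0.Useful) (hL0 : D0.lang = L)
    (hmin : ∀ α ∈ Pref L, ∀ β ∈ Pref L, NerodeEq L α β →
        D0.deltaStar D0.start α = D0.deltaStar D0.start β)
    (hreach : D.Reachable) (huse : D.Useful) (hL : D.lang = L)
    (Q' : Set Q0) (hent : D0.Entangled Q') :
    ∃ Q'' : Set Q, D.Entangled Q'' ∧ Q''.ncard = Q'.ncard := by
  obtain ⟨α, hpref, hmono, hinf⟩ := hent
  have hprefL : ∀ i, α i ∈ Pref L := by intro i; rw [← hL0]; exact hpref i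
  have hprefD : ∀ i, α i ∈ Pref D.lang := by intro i; rw [hL]; exact hprefL i
  have hdef : ∀ i, ∃ p, D.deltaStar D.start (α i) = some p :=
    fun i => my_pref_defined D (hprefD i)
  choose F hF using hdef
  have key : ∀ q ∈ Q',
      ∃ p : Q, {i | (D0.deltaStar D0.start (α i) = some q) ∧ F i = p}.Infinite := by
    intro q hq
    obtain ⟨p, hp⟩ := my_exists_infinite_fiber (hinf q hq) F
    exact ⟨p, hp⟩
  have : Nonempty Q := ⟨D.start⟩
  choose! g hg using key
  refine ⟨g '' Q', ⟨α, fun i => hprefD i, hmono, ?_⟩, ?_⟩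
  · rintro p ⟨q, hq, rfl⟩
    apply (hg q hq).mono
    rintro i ⟨_, hFi⟩
    simp only [Set.mem_setOf_eq]
    rw [hF i, hFi]
  · apply Set.ncard_image_of_injOn
    intro q1 hq1 q2 hq2 heq
    obtain ⟨i, hi1, hi2⟩ := (hg q1 hq1).nonempty
    obtain ⟨j, hj1, hj2⟩ := (hg q2 hq2).nonempty
    have hstate : D.deltaStar D.start (α i) = some (g q1) := by rw [hF i, hi2]
    have hstate' : D.deltaStar D.start (α j) = some (g q1) := by rw [hF j, hj2, ← heq]
    have hner : NerodeEq D.lang (α i) (α j) := my_nerode_of_same_state D hstate hstate'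
    rw [hL] at hner
    have h := hmin (α i) (hprefL i) (α j) (hprefL j) hner
    rw [hi1, hj1] at h
    exact Option.some.inj h
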